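/- Let (μ_i)_{i≥1} and (ξ_i)_{i≥1} be sequences of positive reals with S := Σ_{i≥1} 1/√μ_i < ∞. For λ > 0 let N(λ) denote the (finite) number of triples of positive integers (i, m, n) with n²·μ_i + m²·ξ_i < λ. Then for every λ > 0: 0 ≤ Σ_{(i,n) : n²μ_i < λ} √((λ − n²μ_i)/ξ_i) − N(λ) ≤ S·√λ, where the sum runs over all pairs of positive integers (i, n) with n²·μ_i < λ (a finite set). -/

import Mathlib

open Real

private lemma T_eq (y : ℝ) : {m : ℕ+ | ((m:ℕ):ℝ) < y} = (fun m : ℕ+ => (m:ℕ)) ⁻¹' (Set.Iio ⌈y⌉₊) := by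
  ext m; simp [Nat.lt_ceil]

private lemma T_finite (y : ℝ) : {m : ℕ+ | ((m:ℕ):ℝ) < y}.Finite := by
  rw [T_eq]
  exact Set.Finite.preimage (Set.injOn_of_injective PNat.coe_injective) (Set.finite_Iio _)

private lemma T_card (y : ℝ) : Nat.card {m : ℕ+ | ((m:ℕ):ℝ) < y} = ⌈y⌉₊ - 1 := by
  have h1 : (fun m : ℕ+ => (m:ℕ)) '' {m : ℕ+ | ((m:ℕ):ℝ) < y} = Set.Ico 1 ⌈y⌉₊ := by
    ext k
    constructor
    · rintro ⟨m, hm, rfl⟩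
      exact ⟨m.one_le, Nat.lt_ceil.2 hm⟩
    · rintro ⟨h1, h2⟩
      exact ⟨⟨k, h1⟩, Nat.lt_ceil.1 h2, rfl⟩
  have h2 := Nat.card_image_of_injective PNat.coe_injective {m : ℕ+ | ((m:ℕ):ℝ) < y}
  rw [h1] at h2
  rw [← h2]
  simp [Nat.card_eq_card_toFinset]

private lemma T_card_le {y : ℝ} (hy : 0 ≤ y) : (Nat.card {m : ℕ+ | ((m:ℕ):ℝ) < y} : ℝ) ≤ y := by
  rw [T_card]
  rcases Nat.eq_zero_or_pos ⌈y⌉₊ with h | h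
  · simp [h, hy]
  · have h3 : ((⌈y⌉₊ - 1 : ℕ) : ℝ) = (⌈y⌉₊ : ℝ) - 1 := by
      push_cast [h]; ring
    rw [h3]
    linarith [Nat.ceil_lt_add_one hy]

private lemma le_T_card {y : ℝ} (hy : 0 ≤ y) : y - 1 ≤ (Nat.card {m : ℕ+ | ((m:ℕ):ℝ) < y} : ℝ) := by
  rw [T_card]
  rcases Nat.eq_zero_or_pos ⌈y⌉₊ with h | h
  · have h2 : y ≤ 0 := by simpa using Nat.ceil_eq_zero.mp h
    simp [h]; linarith
  · have h3 : ((⌈y⌉₊ - 1 : ℕ) : ℝ) = (⌈y⌉₊ : ℝ) - 1 := by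
      push_cast [h]; ring
    rw [h3]; linarith [Nat.le_ceil y]

private lemma cond_iff {x c d : ℝ} (hx : 0 ≤ x) (hc : 0 < c) :
    x ^ 2 * c < d ↔ x < Real.sqrt (d / c) := by
  rw [Real.lt_sqrt hx, lt_div_iff₀ hc]

theorem stmt_6 (μ ξ : ℕ+ → ℝ) (hμ : ∀ i, 0 < μ i) (hξ : ∀ i, 0 < ξ i)
    (S : ℝ) (hSsum : Summable fun i => 1 / Real.sqrt (μ i))
    (hS : ∑' i, 1 / Real.sqrt (μ i) = S)
    (lam : ℝ) (hlam : 0 < lam) :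
    0 ≤ (∑ᶠ p ∈ {p : ℕ+ × ℕ+ | ((p.2 : ℕ) : ℝ) ^ 2 * μ p.1 < lam},
          Real.sqrt ((lam - ((p.2 : ℕ) : ℝ) ^ 2 * μ p.1) / ξ p.1))
        - (Nat.card {q : ℕ+ × ℕ+ × ℕ+ //
            ((q.2.2 : ℕ) : ℝ) ^ 2 * μ q.1 + ((q.2.1 : ℕ) : ℝ) ^ 2 * ξ q.1 < lam} : ℝ)
    ∧ (∑ᶠ p ∈ {p : ℕ+ × ℕ+ | ((p.2 : ℕ) : ℝ) ^ 2 * μ p.1 < lam},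
          Real.sqrt ((lam - ((p.2 : ℕ) : ℝ) ^ 2 * μ p.1) / ξ p.1))
        - (Nat.card {q : ℕ+ × ℕ+ × ℕ+ //
            ((q.2.2 : ℕ) : ℝ) ^ 2 * μ q.1 + ((q.2.1 : ℕ) : ℝ) ^ 2 * ξ q.1 < lam} : ℝ)
      ≤ S * Real.sqrt lam := by
  classical
  set A : Set (ℕ+ × ℕ+) := {p : ℕ+ × ℕ+ | ((p.2 : ℕ) : ℝ) ^ 2 * μ p.1 < lam} with hAdef
  have hAiff : ∀ p : ℕ+ × ℕ+, p ∈ A ↔ ((p.2:ℕ):ℝ) < Real.sqrt (lam / μ p.1) :=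
    fun p => cond_iff (by positivity) (hμ p.1)
  -- finitely many admissible indices
  have hsq : 0 < Real.sqrt lam := Real.sqrt_pos.2 hlam
  have hev := Metric.tendsto_nhds.1 hSsum.tendsto_cofinite_zero (1 / Real.sqrt lam)
    (by positivity)
  have hI0 : {i : ℕ+ | μ i < lam}.Finite := by
    refine Set.Finite.subset (Filter.eventually_cofinite.1 hev) ?_
    intro i hi
    simp only [Set.mem_setOf_eq] at hi ⊢
    have h1 : Real.sqrt (μ i) < Real.sqrt lam := Real.sqrt_lt_sqrt (hμ i).le hi
    have h2 : 0 < Real.sqrt (μ i) := Real.sqrt_pos.2 (hμ i)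
    rw [Real.dist_eq, sub_zero, abs_of_nonneg (by positivity), not_lt]
    exact one_div_le_one_div_of_le h2 h1.le
  have hA : A.Finite := by
    refine Set.Finite.subset
      (Set.Finite.biUnion hI0 (fun i _ =>
        (T_finite (Real.sqrt (lam / μ i))).image (fun n => (i, n)))) ?_
    rintro ⟨i, n⟩ hp
    have hn : ((n:ℕ):ℝ) ^ 2 * μ i < lam := hp
    have hone : (1:ℝ) ≤ ((n:ℕ):ℝ) := by exact_mod_cast n.one_le
    have h2 : (1:ℝ) ≤ ((n:ℕ):ℝ) ^ 2 := by nlinarith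
    have hi : μ i < lam := by nlinarith [hμ i]
    exact Set.mem_biUnion hi ⟨n, (hAiff (i, n)).1 hp, rfl⟩
  set F : Finset (ℕ+ × ℕ+) := hA.toFinset with hFdef
  -- fibers
  set c : ℕ+ × ℕ+ → ℝ := fun p => Real.sqrt ((lam - ((p.2:ℕ):ℝ) ^ 2 * μ p.1) / ξ p.1) with hcdef
  have hfib_iff : ∀ (p : ℕ+ × ℕ+) (m : ℕ+),
      ((m:ℕ):ℝ) < c p ↔ ((m:ℕ):ℝ) ^ 2 * ξ p.1 < lam - ((p.2:ℕ):ℝ) ^ 2 * μ p.1 :=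
    fun p m => (cond_iff (by positivity) (hξ p.1)).symm
  set G : Finset (ℕ+ × ℕ+ × ℕ+) :=
    F.biUnion (fun p => (T_finite (c p)).toFinset.image (fun m => (p.1, m, p.2))) with hGdef
  have hGQ : (↑G : Set (ℕ+ × ℕ+ × ℕ+)) =
      {q : ℕ+ × ℕ+ × ℕ+ | ((q.2.2 : ℕ) : ℝ) ^ 2 * μ q.1 + ((q.2.1 : ℕ) : ℝ) ^ 2 * ξ q.1 < lam} := by
    ext ⟨i, m, n⟩
    simp only [hGdef, Finset.coe_biUnion, Set.mem_iUnion, Finset.mem_coe, Finset.mem_image,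
      Set.Finite.mem_toFinset, Set.mem_setOf_eq]
    constructor
    · rintro ⟨p, hpF, m', hm', heq⟩
      obtain ⟨h1, h2, h3⟩ : p.1 = i ∧ m' = m ∧ p.2 = n := by
        simpa [Prod.ext_iff] using heq
      have hmm := (hfib_iff p m').1 hm'
      rw [h1, h2, h3] at hmm
      linarith
    · intro hq
      have hm2 : 0 < ((m:ℕ):ℝ) ^ 2 * ξ i := by
        have hone : (1:ℝ) ≤ ((m:ℕ):ℝ) := by exact_mod_cast m.one_le
        nlinarith [hξ i, sq_nonneg (((m:ℕ):ℝ) - 1)]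

      have hpA : (i, n) ∈ A := by
        simp only [hAdef, Set.mem_setOf_eq]
        linarith
      refine ⟨(i, n), by simpa [hFdef] using hpA, m, ?_, rfl⟩
      exact (hfib_iff (i, n) m).2 (by simpa using (by linarith :
        ((m:ℕ):ℝ) ^ 2 * ξ i < lam - ((n:ℕ):ℝ) ^ 2 * μ i))
  -- Nat.card of the triple set equals G.card
  have hQcard : (Nat.card {q : ℕ+ × ℕ+ × ℕ+ //
      ((q.2.2 : ℕ) : ℝ) ^ 2 * μ q.1 + ((q.2.1 : ℕ) : ℝ) ^ 2 * ξ q.1 < lam}) = G.card := by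
    have h1 : Nat.card {q : ℕ+ × ℕ+ × ℕ+ //
        ((q.2.2 : ℕ) : ℝ) ^ 2 * μ q.1 + ((q.2.1 : ℕ) : ℝ) ^ 2 * ξ q.1 < lam} =
        ({q : ℕ+ × ℕ+ × ℕ+ | ((q.2.2 : ℕ) : ℝ) ^ 2 * μ q.1 + ((q.2.1 : ℕ) : ℝ) ^ 2 * ξ q.1 < lam}).ncard :=
      Nat.card_coe_set_eq _
    rw [h1, ← hGQ, Set.ncard_coe_finset]
  -- G.card as a sum of fiber counts
  have hinjm : ∀ p : ℕ+ × ℕ+, Function.Injective (fun m : ℕ+ => (p.1, m, p.2)) := by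
    intro p a b hab
    simpa [Prod.ext_iff] using hab
  have hGcard : G.card = ∑ p ∈ F, Nat.card {m : ℕ+ | ((m:ℕ):ℝ) < c p} := by
    rw [hGdef, Finset.card_biUnion]
    · refine Finset.sum_congr rfl (fun p _ => ?_)
      rw [Finset.card_image_of_injective _ (hinjm p)]
      rw [Nat.card_coe_set_eq, Set.ncard_eq_toFinset_card _ (T_finite (c p))]
    · intro p hp q hq hpq
      rw [Function.onFun, Finset.disjoint_left]
      rintro x hx1 hx2
      simp only [Finset.mem_image, Set.Finite.mem_toFinset] at hx1 hx2
      obtain ⟨m1, _, rfl⟩ := hx1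
      obtain ⟨m2, _, heq⟩ := hx2
      apply hpq
      obtain ⟨e1, e2, e3⟩ : q.1 = p.1 ∧ m2 = m1 ∧ q.2 = p.2 := by
        simpa [Prod.ext_iff] using heq
      exact Prod.ext e1.symm e3.symm
  -- rewrite the finsum as a Finset sum
  have hfinsum : (∑ᶠ p ∈ A, c p) = ∑ p ∈ F, c p := by
    rw [← Set.Finite.coe_toFinset hA, finsum_mem_coe_finset]
  -- per-term bounds
  have hterm : ∀ p ∈ F, 0 ≤ c p - (Nat.card {m : ℕ+ | ((m:ℕ):ℝ) < c p} : ℝ) ∧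
      c p - (Nat.card {m : ℕ+ | ((m:ℕ):ℝ) < c p} : ℝ) ≤ 1 := by
    intro p hp
    have hc0 : 0 ≤ c p := Real.sqrt_nonneg _
    constructor
    · linarith [T_card_le hc0]
    · linarith [le_T_card hc0]
  -- cardinality of F bound
  have hFcard : (F.card : ℝ) ≤ S * Real.sqrt lam := by
    set I : Finset ℕ+ := F.image Prod.fst with hIdef
    have hfibw : F.card = ∑ i ∈ I, (F.filter (fun p => p.1 = i)).card :=
      Finset.card_eq_sum_card_fiberwise (fun p hp => Finset.mem_image_of_mem _ hp)
    have hcount : ∀ i ∈ I, ((F.filter (fun p => p.1 = i)).card : ℝ)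
        ≤ Real.sqrt lam * (1 / Real.sqrt (μ i)) := by
      intro i _
      have hle : (F.filter (fun p => p.1 = i)).card ≤ (T_finite (Real.sqrt (lam / μ i))).toFinset.card := by
        apply Finset.card_le_card_of_injOn (fun p => p.2)
        · intro p hp
          simp only [Finset.coe_filter, Set.mem_setOf_eq, Finset.mem_filter] at hp
          obtain ⟨hpF, hpi⟩ := hp
          have hpA : p ∈ A := by simpa [hFdef] using hpF
          have := (hAiff p).1 hpA
          rw [hpi] at this
          simpa using this
        · intro p hp q hq h2
          simp only [Finset.coe_filter, Set.mem_setOf_eq] at hp hq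
          exact Prod.ext (hp.2.trans hq.2.symm) h2
      have hcard : ((T_finite (Real.sqrt (lam / μ i))).toFinset.card : ℝ) ≤ Real.sqrt (lam / μ i) := by
        rw [← Set.ncard_eq_toFinset_card _ (T_finite _), ← Nat.card_coe_set_eq]
        exact T_card_le (Real.sqrt_nonneg _)
      have hdiv : Real.sqrt (lam / μ i) = Real.sqrt lam * (1 / Real.sqrt (μ i)) := by
        rw [Real.sqrt_div hlam.le, div_eq_mul_one_div]
      calc ((F.filter (fun p => p.1 = i)).card : ℝ) ≤ _ := by exact_mod_cast hle
        _ ≤ Real.sqrt (lam / μ i) := hcard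
        _ = Real.sqrt lam * (1 / Real.sqrt (μ i)) := hdiv
    have hsum : ∑ i ∈ I, (1 / Real.sqrt (μ i)) ≤ S := by
      rw [← hS]
      exact Summable.sum_le_tsum I (fun i _ => by positivity) hSsum
    calc (F.card : ℝ) = ∑ i ∈ I, ((F.filter (fun p => p.1 = i)).card : ℝ) := by
          exact_mod_cast hfibw
      _ ≤ ∑ i ∈ I, Real.sqrt lam * (1 / Real.sqrt (μ i)) := Finset.sum_le_sum hcount
      _ = Real.sqrt lam * ∑ i ∈ I, (1 / Real.sqrt (μ i)) := by rw [Finset.mul_sum]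
      _ ≤ Real.sqrt lam * S := by
          exact mul_le_mul_of_nonneg_left hsum (Real.sqrt_nonneg _)
      _ = S * Real.sqrt lam := mul_comm _ _
  -- put everything together
  have hdiff : (∑ᶠ p ∈ A, c p) - (Nat.card {q : ℕ+ × ℕ+ × ℕ+ //
      ((q.2.2 : ℕ) : ℝ) ^ 2 * μ q.1 + ((q.2.1 : ℕ) : ℝ) ^ 2 * ξ q.1 < lam} : ℝ)
      = ∑ p ∈ F, (c p - (Nat.card {m : ℕ+ | ((m:ℕ):ℝ) < c p} : ℝ)) := by
    rw [hfinsum, hQcard, hGcard]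
    push_cast
    rw [Finset.sum_sub_distrib]
  rw [hdiff]
  constructor
  · exact Finset.sum_nonneg (fun p hp => (hterm p hp).1)
  · calc ∑ p ∈ F, (c p - (Nat.card {m : ℕ+ | ((m:ℕ):ℝ) < c p} : ℝ))
        ≤ ∑ p ∈ F, (1:ℝ) := Finset.sum_le_sum (fun p hp => (hterm p hp).2)
      _ = F.card := by simp
      _ ≤ S * Real.sqrt lam := hFcard
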